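/- In a simplified market, let X_r be a removable set of type II with respect to a legal allocation O, and let B be the submarket induced by O with item set X ∖ X_r. If a price vector p with 0 < p_x < 1 for all x ∈ X satisfies (1) p_x > p_y for all x ∈ X_r and y ∈ X ∖ X_r, and (2) the restriction of p to X ∖ X_r is a dynamic pricing of B, then p is a dynamic pricing of the market. -/

import Mathlib

open Finset

/-- The value of a bundle `S` for a player with demand `k` and item valuations `v`:
the maximum, over subsets `T ⊆ S` with `|T| ≤ k`, of the total value of `T`. -/
noncomputable def bundleValue {X : Type*} [DecidableEq X] (k : ℕ) (v : X → ℝ)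
    (S : Finset X) : ℝ :=
  ((S.powerset.filter (fun T => T.card ≤ k)).image (fun T => ∑ x ∈ T, v x)).max'
    (Finset.Nonempty.image ⟨∅, by simp⟩ _)

/-- A legal allocation of a simplified market: a partition of the items into bundles
`O i` with `|O i| = k i` and `O i ⊆ 𝓛 i` for every player `i`. -/
def LegalAlloc {X I : Type*} (k : I → ℕ) (L : I → Finset X) (O : I → Finset X) : Prop :=
  (∀ i, (O i).card = k i) ∧ (∀ x : X, ∃! i, x ∈ O i) ∧ (∀ i, O i ⊆ L i)

/-- In a simplified market, player `i` values an item at `2` if it is legal for `i`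
and at `1` otherwise. -/
noncomputable def simpVal {X I : Type*} [DecidableEq X] (L : I → Finset X) (i : I) :
    X → ℝ :=
  fun x => if x ∈ L i then 2 else 1

/-- The bundle `S` is in demand for a player with demand `k`, valuations `v` and
prices `p`: it maximizes utility (value minus total price) over all bundles. -/
def InDemand {X : Type*} [DecidableEq X] (k : ℕ) (v : X → ℝ) (p : X → ℝ)
    (S : Finset X) : Prop :=
  ∀ S' : Finset X, bundleValue k v S' - ∑ x ∈ S', p x ≤ bundleValue k v S - ∑ x ∈ S, p x

/-- A legal allocation of the submarket induced by the legal allocation `O` with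
item set `XB`: a partition of `XB` where player `i` receives `|O i ∩ XB|` items,
all of which are legal for `i`. -/
def SubLegalAlloc {X I : Type*} [DecidableEq X] (L : I → Finset X)
    (O : I → Finset X) (XB : Finset X) (O' : I → Finset X) : Prop :=
  (∀ i, (O' i).card = (O i ∩ XB).card) ∧ (∀ x ∈ XB, ∃! i, x ∈ O' i) ∧
  (∀ i, O' i ⊆ XB) ∧ (∀ i, O' i ⊆ L i)

/-- The bundle `S ⊆ XB` is in demand in the submarket with item set `XB` for a player
with demand `k`, valuations `v` and prices `p`: it maximizes utility over bundles
contained in `XB`. -/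
def SubInDemand {X : Type*} [DecidableEq X] (XB : Finset X) (k : ℕ) (v : X → ℝ)
    (p : X → ℝ) (S : Finset X) : Prop :=
  S ⊆ XB ∧ ∀ S' : Finset X, S' ⊆ XB →
    bundleValue k v S' - ∑ x ∈ S', p x ≤ bundleValue k v S - ∑ x ∈ S, p x

/-- The edge relation of the legality graph `G(O)`: `x → y` iff some player `i`
has `x ∈ O i` and `y ∈ 𝓛 i ∖ O i`. -/
def LegalityEdge {X I : Type*} (L : I → Finset X) (O : I → Finset X) (x y : X) : Prop :=
  ∃ i, x ∈ O i ∧ y ∈ L i ∧ y ∉ O i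

/-- There is a directed path from `x` to `y` in the subgraph of the legality graph
`G(O)` induced on the vertex set `Xr`. -/
def PathInduced {X I : Type*} (L : I → Finset X) (O : I → Finset X) (Xr : Finset X)
    (x y : X) : Prop :=
  ∃ (l : ℕ) (z : Fin (l + 1) → X),
    (∀ j, z j ∈ Xr) ∧ z 0 = x ∧ z (Fin.last l) = y ∧
    ∀ j : Fin l, LegalityEdge L O (z j.castSucc) (z j.succ)

/-- `Xr` is a removable set of type II with respect to the legal allocation `O`:
every player owns exactly one item of `Xr`, and the subgraph of the legality graph
induced on `Xr` is strongly connected. -/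
def RemovableTypeII {X I : Type*} [Fintype I] [DecidableEq X]
    (L : I → Finset X) (O : I → Finset X) (Xr : Finset X) : Prop :=
  (∀ i, (O i ∩ Xr).card = 1) ∧
  (∀ x ∈ Xr, ∀ y ∈ Xr, PathInduced L O Xr x y)


lemma le_bundleValue {X : Type*} [DecidableEq X] (k : ℕ) (v : X → ℝ) {S T : Finset X}
    (hTS : T ⊆ S) (hTk : T.card ≤ k) : ∑ x ∈ T, v x ≤ bundleValue k v S :=
by
  apply Finset.le_max'
  exact Finset.mem_image_of_mem _ (Finset.mem_filter.mpr ⟨Finset.mem_powerset.mpr hTS, hTk⟩)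

lemma bundleValue_spec {X : Type*} [DecidableEq X] (k : ℕ) (v : X → ℝ) (S : Finset X) :
    ∃ T, T ⊆ S ∧ T.card ≤ k ∧ bundleValue k v S = ∑ x ∈ T, v x := by
  have h := Finset.max'_mem ((S.powerset.filter (fun T => T.card ≤ k)).image
    (fun T => ∑ x ∈ T, v x)) (Finset.Nonempty.image ⟨∅, by simp⟩ _)
  rw [Finset.mem_image] at h
  obtain ⟨T, hT, hEq⟩ := h
  rw [Finset.mem_filter, Finset.mem_powerset] at hT
  exact ⟨T, hT.1, hT.2, hEq.symm⟩

lemma bundleValue_eq_sum {X : Type*} [DecidableEq X] {k : ℕ} {v : X → ℝ} {S : Finset X}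
    (h0 : ∀ x, 0 ≤ v x) (h : S.card ≤ k) : bundleValue k v S = ∑ x ∈ S, v x := by
  refine le_antisymm ?_ (le_bundleValue k v (subset_refl S) h)
  obtain ⟨T, hTS, _, hEq⟩ := bundleValue_spec k v S
  rw [hEq]
  exact Finset.sum_le_sum_of_subset_of_nonneg hTS (fun x _ _ => h0 x)

lemma simpVal_nonneg {X I : Type*} [DecidableEq X] (L : I → Finset X) (i : I) (x : X) :
    0 ≤ simpVal L i x := by
  unfold simpVal; split <;> norm_num

lemma simpVal_of_mem {X I : Type*} [DecidableEq X] {L : I → Finset X} {i : I} {x : X}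
    (h : x ∈ L i) : simpVal L i x = 2 := by simp [simpVal, h]

lemma simpVal_of_not_mem {X I : Type*} [DecidableEq X] {L : I → Finset X} {i : I} {x : X}
    (h : x ∉ L i) : simpVal L i x = 1 := by simp [simpVal, h]

lemma inDemand_char {X I : Type*} [DecidableEq X] {L : I → Finset X} {i : I} {k : ℕ}
    {p : X → ℝ} (hp : ∀ x, 0 < p x ∧ p x < 1) (hkL : k ≤ (L i).card)
    {S : Finset X} (hd : InDemand k (simpVal L i) p S) :
    S.card = k ∧ S ⊆ L i ∧ ∀ x ∈ S, ∀ y ∈ L i, y ∉ S → p x ≤ p y := by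
  set v := simpVal L i with hv
  have hcard : S.card = k := by
    rcases lt_trichotomy S.card k with hlt | heq | hgt
    · -- add a legal item
      exfalso
      have hns : ¬ L i ⊆ S := fun hsub => absurd (Finset.card_le_card hsub) (by omega)
      obtain ⟨y, hyL, hyS⟩ := Finset.not_subset.mp hns
      obtain ⟨T, hTS, hTk, hEq⟩ := bundleValue_spec k v S
      have hTc : T.card < k := lt_of_le_of_lt (Finset.card_le_card hTS) hlt
      have hyT : y ∉ T := fun h => hyS (hTS h)
      have h1 : ∑ x ∈ insert y T, v x ≤ bundleValue k v (insert y S) := by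
        apply le_bundleValue
        · exact Finset.insert_subset_insert _ hTS
        · rw [Finset.card_insert_of_notMem hyT]; omega
      rw [Finset.sum_insert hyT] at h1
      have hvy : v y = 2 := simpVal_of_mem hyL
      have h2 := hd (insert y S)
      rw [Finset.sum_insert hyS] at h2
      have := hp y
      rw [← hEq] at h1
      linarith
    · exact heq
    · exfalso
      obtain ⟨T, hTS, hTk, hEq⟩ := bundleValue_spec k v S
      have : T ⊂ S := lt_of_le_of_ne hTS (by rintro rfl; omega)
      obtain ⟨y, hyS, hyT⟩ := Finset.exists_of_ssubset this
      have h1 : ∑ x ∈ T, v x ≤ bundleValue k v (S.erase y) := by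
        apply le_bundleValue _ _ _ hTk
        exact fun a ha => Finset.mem_erase.mpr ⟨fun h => hyT (h ▸ ha), hTS ha⟩
      have h2 := hd (S.erase y)
      have hsum : ∑ x ∈ S.erase y, p x = ∑ x ∈ S, p x - p y := by
        rw [← Finset.add_sum_erase S p hyS]; ring
      rw [hsum] at h2
      have := hp y
      rw [← hEq] at h1
      linarith
  have hSL : S ⊆ L i := by
    intro y hyS
    by_contra hyL
    have hns : ¬ L i ⊆ S := by
      intro hsub
      have : L i = S := Finset.eq_of_subset_of_card_le hsub (by omega)
      exact hyL (this ▸ hyS)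
    obtain ⟨x, hxL, hxS⟩ := Finset.not_subset.mp hns
    have hxe : x ∉ S.erase y := fun h => hxS (Finset.mem_of_mem_erase h)
    set S' := insert x (S.erase y) with hS'
    have hc' : S'.card = k := by
      rw [hS', Finset.card_insert_of_notMem hxe, Finset.card_erase_of_mem hyS]
      have : 1 ≤ S.card := Finset.card_pos.mpr ⟨y, hyS⟩
      omega
    have hbS : bundleValue k v S = ∑ x ∈ S, v x :=
      bundleValue_eq_sum (simpVal_nonneg L i) (le_of_eq hcard)
    have hbS' : bundleValue k v S' = ∑ x ∈ S', v x :=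
      bundleValue_eq_sum (simpVal_nonneg L i) (le_of_eq hc')
    have hsv : ∑ x ∈ S', v x = v x + (∑ x ∈ S, v x - v y) := by
      rw [hS', Finset.sum_insert hxe, ← Finset.add_sum_erase S v hyS]; ring
    have hsp : ∑ a ∈ S', p a = p x + (∑ a ∈ S, p a - p y) := by
      rw [hS', Finset.sum_insert hxe, ← Finset.add_sum_erase S p hyS]; ring
    have h2 := hd S'
    rw [hbS, hbS', hsv, hsp] at h2
    have hvx : v x = 2 := simpVal_of_mem hxL
    have hvy : v y = 1 := simpVal_of_not_mem hyL
    have := hp x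
    have := hp y
    linarith
  refine ⟨hcard, hSL, ?_⟩
  intro x hxS y hyL hyS
  by_contra hlt
  push_neg at hlt
  have hye : y ∉ S.erase x := fun h => hyS (Finset.mem_of_mem_erase h)
  set S' := insert y (S.erase x) with hS'
  have hc' : S'.card = k := by
    rw [hS', Finset.card_insert_of_notMem hye, Finset.card_erase_of_mem hxS]
    have : 1 ≤ S.card := Finset.card_pos.mpr ⟨x, hxS⟩
    omega
  have hbS : bundleValue k v S = ∑ x ∈ S, v x :=
    bundleValue_eq_sum (simpVal_nonneg L i) (le_of_eq hcard)
  have hbS' : bundleValue k v S' = ∑ x ∈ S', v x :=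
    bundleValue_eq_sum (simpVal_nonneg L i) (le_of_eq hc')
  have hsv : ∑ a ∈ S', v a = v y + (∑ a ∈ S, v a - v x) := by
    rw [hS', Finset.sum_insert hye, ← Finset.add_sum_erase S v hxS]; ring
  have hsp : ∑ a ∈ S', p a = p y + (∑ a ∈ S, p a - p x) := by
    rw [hS', Finset.sum_insert hye, ← Finset.add_sum_erase S p hxS]; ring
  have h2 := hd S'
  rw [hbS, hbS', hsv, hsp] at h2
  have hvx : v x = 2 := simpVal_of_mem (hSL hxS)
  have hvy : v y = 2 := simpVal_of_mem hyL
  linarith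

lemma sum_le_sum_pairs {α β : Type*} (s : Finset α) (t : Finset β) (f : α → ℝ) (g : β → ℝ)
    (hcard : s.card = t.card) (h : ∀ a ∈ s, ∀ b ∈ t, f a ≤ g b) :
    ∑ a ∈ s, f a ≤ ∑ b ∈ t, g b := by
  rcases s.eq_empty_or_nonempty with rfl | hs
  · have : t = ∅ := Finset.card_eq_zero.mp (by simpa using hcard.symm)
    simp [this]
  · have ht : t.Nonempty := Finset.card_pos.mp (hcard ▸ Finset.card_pos.mpr hs)
    obtain ⟨b₀, hb₀, hmin⟩ := Finset.exists_min_image t g ht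
    calc ∑ a ∈ s, f a ≤ s.card • g b₀ :=
          Finset.sum_le_card_nsmul s f (g b₀) (fun a ha => h a ha b₀ hb₀)
      _ = t.card • g b₀ := by rw [hcard]
      _ ≤ ∑ b ∈ t, g b := Finset.card_nsmul_le_sum t g (g b₀) hmin

lemma subInDemand_of_cheapest {X I : Type*} [DecidableEq X] {L : I → Finset X} {i : I}
    {p : X → ℝ} (hp : ∀ x, 0 < p x ∧ p x < 1) {XB : Finset X} {k' : ℕ}
    {C : Finset X} (hCB : C ⊆ XB) (hCL : C ⊆ L i) (hCc : C.card = k')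
    (hch : ∀ c ∈ C, ∀ y ∈ L i, y ∈ XB → y ∉ C → p c ≤ p y) :
    SubInDemand XB k' (simpVal L i) p C := by
  set v := simpVal L i with hv
  refine ⟨hCB, fun S' hS' => ?_⟩
  have hbvC : bundleValue k' v C = ∑ c ∈ C, v c :=
    bundleValue_eq_sum (simpVal_nonneg L i) (le_of_eq hCc)
  have hrhs : bundleValue k' v C - ∑ c ∈ C, p c = ∑ c ∈ C, (2 - p c) := by
    rw [hbvC, ← Finset.sum_sub_distrib]
    apply Finset.sum_congr rfl
    intro c hc
    rw [hv, simpVal_of_mem (hCL hc)]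
  obtain ⟨T, hTS, hTk, hbv⟩ := bundleValue_spec k' v S'
  have h1 : bundleValue k' v S' - ∑ x ∈ S', p x ≤ ∑ x ∈ T, (v x - p x) := by
    rw [hbv, Finset.sum_sub_distrib]
    have : ∑ x ∈ T, p x ≤ ∑ x ∈ S', p x :=
      Finset.sum_le_sum_of_subset_of_nonneg hTS (fun x _ _ => (hp x).1.le)
    linarith
  -- split T
  have hsplit : ∑ x ∈ T ∩ C, (v x - p x) + ∑ x ∈ T \ C, (v x - p x) = ∑ x ∈ T, (v x - p x) :=
    Finset.sum_inter_add_sum_sdiff T C _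
  -- find D
  have hc1 := Finset.card_sdiff_add_card_inter T C
  have hc2 := Finset.card_sdiff_add_card_inter C T
  have hcomm : (T ∩ C).card = (C ∩ T).card := by rw [Finset.inter_comm]
  have hcardle : (T \ C).card ≤ (C \ T).card := by omega
  obtain ⟨D, hDsub, hDcard⟩ := Finset.exists_subset_card_eq hcardle
  have hpair : ∑ x ∈ T \ C, (v x - p x) ≤ ∑ d ∈ D, (2 - p d) := by
    apply sum_le_sum_pairs _ _ _ _ hDcard.symm
    intro a ha d hd
    have haT : a ∈ T := (Finset.mem_sdiff.mp ha).1
    have haC : a ∉ C := (Finset.mem_sdiff.mp ha).2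
    have hdC : d ∈ C := (Finset.mem_sdiff.mp (hDsub hd)).1
    have hpd := hp d
    by_cases haL : a ∈ L i
    · have := hch d hdC a haL (hS' (hTS haT)) haC
      rw [hv, simpVal_of_mem haL]
      linarith
    · rw [hv, simpVal_of_not_mem haL]
      have := (hp a).1
      linarith
  have hTC : ∑ x ∈ T ∩ C, (v x - p x) = ∑ x ∈ T ∩ C, (2 - p x) := by
    apply Finset.sum_congr rfl
    intro x hx
    rw [hv, simpVal_of_mem (hCL (Finset.mem_of_mem_inter_right hx))]
  have hdisj : Disjoint (T ∩ C) D := by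
    apply Finset.disjoint_left.mpr
    intro a ha hD
    exact (Finset.mem_sdiff.mp (hDsub hD)).2 (Finset.mem_of_mem_inter_left ha)
  have hunion : ∑ x ∈ (T ∩ C) ∪ D, (2 - p x) ≤ ∑ c ∈ C, (2 - p c) := by
    apply Finset.sum_le_sum_of_subset_of_nonneg
    · apply Finset.union_subset (Finset.inter_subset_right)
      exact hDsub.trans (Finset.sdiff_subset)
    · intro x _ _
      have := (hp x).2
      linarith
  rw [Finset.sum_union hdisj] at hunion
  rw [hrhs]
  linarith

lemma path_rtg {X I : Type*} {L O : I → Finset X} {Xr : Finset X} {x y : X}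
    (h : PathInduced L O Xr x y) :
    Relation.ReflTransGen (fun a b => a ∈ Xr ∧ b ∈ Xr ∧ LegalityEdge L O a b) x y := by
  obtain ⟨l, z, hz, h0, hl, he⟩ := h
  have key : ∀ a : Fin (l + 1),
      Relation.ReflTransGen (fun a b => a ∈ Xr ∧ b ∈ Xr ∧ LegalityEdge L O a b) (z 0) (z a) := by
    intro a
    induction a using Fin.induction with
    | zero => exact Relation.ReflTransGen.refl
    | succ i ih => exact ih.tail ⟨hz _, hz _, he i⟩
  rw [← h0, ← hl]
  exact key _

lemma rtg_list {X : Type*} {E : X → X → Prop} {x y : X} (h : Relation.ReflTransGen E x y) :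
    ∃ (l : List X), l ≠ [] ∧ l.head? = some x ∧ l.getLast? = some y ∧
      l.Chain' E ∧ l.Nodup := by
  induction h using Relation.ReflTransGen.head_induction_on with
  | refl => exact ⟨[y], by simp, by simp, by simp, List.isChain_singleton y, by simp⟩
  | @head a c hac hcb ih =>
    obtain ⟨l, hne, hhead, hlast, hch, hnd⟩ := ih
    by_cases hmem : a ∈ l
    · obtain ⟨s, t, rfl⟩ := List.append_of_mem hmem
      refine ⟨a :: t, by simp, by simp, ?_, ?_, ?_⟩
      · rw [← hlast]
        exact (List.getLast?_append_of_ne_nil s (by simp)).symm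
      · exact hch.right_of_append
      · exact hnd.sublist (List.sublist_append_right s (a :: t))
    · refine ⟨a :: l, by simp, by simp, ?_, ?_, ?_⟩
      · rw [← hlast]
        exact List.getLast?_append_of_ne_nil [a] hne
      · apply List.isChain_cons.mpr
        refine ⟨?_, hch⟩
        intro b hb
        cases l with
        | nil => simp at hne
        | cons c' l' =>
          simp at hb hhead
          subst hb hhead
          exact hac
      · exact List.nodup_cons.mpr ⟨hmem, hnd⟩

lemma rot_perm {X : Type*} [DecidableEq X] (E : X → X → Prop) :
    ∀ (l : List X) (a : X), (a :: l).Chain' E → (a :: l).Nodup →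
    ∃ ρ : Equiv.Perm X, ρ a = (a :: l).getLast (List.cons_ne_nil a l) ∧
      (∀ v, ρ v ≠ v → v ∈ a :: l) ∧
      (∀ v, v ≠ a → ρ v ≠ v → E (ρ v) v) := by
  intro l
  induction l with
  | nil =>
    intro a _ _
    exact ⟨1, by simp, by simp, by simp⟩
  | cons b rest ih =>
    intro a hch hnd
    obtain ⟨hEab, hch'⟩ := List.isChain_cons_cons.mp hch
    have hnd' : (b :: rest).Nodup := hnd.of_cons
    obtain ⟨ρ', h1, h2, h3⟩ := ih b hch' hnd'
    have haNot : a ∉ b :: rest := (List.nodup_cons.mp hnd).1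
    have hab : a ≠ b := fun h => haNot (h ▸ List.mem_cons_self (a := a) (l := rest))
    have hρ'a : ρ' a = a := by
      by_contra h
      exact haNot (h2 a h)
    refine ⟨(Equiv.swap a b).trans ρ', ?_, ?_, ?_⟩
    · have : (Equiv.swap a b) a = b := Equiv.swap_apply_left a b
      simp only [Equiv.trans_apply, this, h1]
      rw [List.getLast_cons (List.cons_ne_nil b rest)]
    · intro v hv
      by_cases hva : v = a
      · exact hva ▸ List.mem_cons_self (a := a)
      by_cases hvb : v = b
      · rw [hvb]; exact List.mem_cons_of_mem a (List.mem_cons_self (a := b) (l := rest))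
      · simp only [Equiv.trans_apply, Equiv.swap_apply_of_ne_of_ne hva hvb] at hv
        exact List.mem_cons_of_mem a (h2 v hv)
    · intro v hva hv
      by_cases hvb : v = b
      · have : (Equiv.swap a b).trans ρ' v = a := by
          rw [hvb]
          simp only [Equiv.trans_apply, Equiv.swap_apply_right, hρ'a]
        rw [this, hvb]
        exact hEab
      · simp only [Equiv.trans_apply, Equiv.swap_apply_of_ne_of_ne hva hvb] at hv ⊢
        exact h3 v hvb hv

lemma perm_of_path {X I : Type*} [DecidableEq X] {L O : I → Finset X} {Xr : Finset X}
    {x y : X} (hx : x ∈ Xr) (h : PathInduced L O Xr x y) :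
    ∃ ρ : Equiv.Perm X, ρ x = y ∧ (∀ v, ρ v ≠ v → v ∈ Xr) ∧
      (∀ v, v ≠ x → ρ v ≠ v → LegalityEdge L O (ρ v) v) := by
  set E : X → X → Prop := fun a b => a ∈ Xr ∧ b ∈ Xr ∧ LegalityEdge L O a b with hE
  obtain ⟨l, hne, hhead, hlast, hch, hnd⟩ := rtg_list (path_rtg h)
  obtain ⟨a, m, rfl⟩ := List.exists_cons_of_ne_nil hne
  have hax : a = x := by simpa using hhead
  subst hax
  have hlast' : (a :: m).getLast (List.cons_ne_nil a m) = y := by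
    rw [List.getLast?_eq_getLast_of_ne_nil hne] at hlast
    simpa using hlast
  obtain ⟨ρ, h1, h2, h3⟩ := rot_perm E (m) a hch hnd
  have hmXr : ∀ (m' : List X) (a' : X), (a' :: m').Chain' E → ∀ v ∈ m', v ∈ Xr := by
    intro m'
    induction m' with
    | nil => intro _ _ v hv; simp at hv
    | cons b rest ih =>
      intro a' hch' v hv
      obtain ⟨hEab, hch''⟩ := List.isChain_cons_cons.mp hch'
      rcases List.mem_cons.mp hv with rfl | hv'
      · exact hEab.2.1
      · exact ih b hch'' v hv'
  refine ⟨ρ, hlast' ▸ h1, ?_, fun v hvx hv => (h3 v hvx hv).2.2⟩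
  intro v hv
  rcases List.mem_cons.mp (h2 v hv) with rfl | hv'
  · exact hx
  · exact hmXr m a hch v hv'

/-- Pricing lemma for a removable set of type II: price the items of the removable
set highest and use a dynamic pricing of the submarket on the remaining items; the
result is a dynamic pricing of the market. -/
theorem dynamic_pricing_of_removable_set_type_II
    {X I : Type*} [Fintype X] [DecidableEq X] [Fintype I] [DecidableEq I]
    (k : I → ℕ) (hk : ∀ i, 1 ≤ k i) (hsum : ∑ i, k i = Fintype.card X)
    (hI : 2 ≤ Fintype.card I)
    (L : I → Finset X)
    (htight : ∀ i, ∀ x ∈ L i, ∃ O : I → Finset X, LegalAlloc k L O ∧ x ∈ O i)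
    (O : I → Finset X) (hO : LegalAlloc k L O)
    (Xr : Finset X) (hXr : RemovableTypeII L O Xr)
    (p : X → ℝ) (hp : ∀ x, 0 < p x ∧ p x < 1)
    (hord : ∀ x ∈ Xr, ∀ y ∉ Xr, p y < p x)
    (hsub : ∀ i, (O i ∩ (Finset.univ \ Xr)).Nonempty →
      ∀ S : Finset X,
        SubInDemand (Finset.univ \ Xr) ((O i ∩ (Finset.univ \ Xr)).card)
          (simpVal L i) p S →
        ∃ O' : I → Finset X, SubLegalAlloc L O (Finset.univ \ Xr) O' ∧ O' i = S) :
    ∀ i, ∀ S : Finset X, InDemand (k i) (simpVal L i) p S →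
      ∃ O'' : I → Finset X, LegalAlloc k L O'' ∧ O'' i = S := by
  classical
  intro i S hd
  obtain ⟨hOcard, hOpart, hOleg⟩ := hO
  -- owner function
  have hωex : ∀ v : X, ∃ l, v ∈ O l ∧ ∀ l', v ∈ O l' → l' = l := by
    intro v
    obtain ⟨l, hl, hu⟩ := hOpart v
    exact ⟨l, hl, fun l' h => hu l' h⟩
  choose ω ωmem ωuniq using hωex
  -- the unique item of `O l` in `Xr`
  have hνex : ∀ l : I, ∃ a, O l ∩ Xr = {a} := fun l => Finset.card_eq_one.mp (hXr.1 l)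
  choose ν hν using hνex
  have νmemO : ∀ l, ν l ∈ O l := fun l =>
    (Finset.mem_inter.mp (by rw [hν l]; exact Finset.mem_singleton_self _)).1
  have νmemXr : ∀ l, ν l ∈ Xr := fun l =>
    (Finset.mem_inter.mp (by rw [hν l]; exact Finset.mem_singleton_self _)).2
  have νuniq : ∀ l v, v ∈ O l → v ∈ Xr → v = ν l := fun l v h1 h2 =>
    Finset.mem_singleton.mp (hν l ▸ Finset.mem_inter.mpr ⟨h1, h2⟩)
  have νinj : ∀ l l', ν l = ν l' → l = l' := by
    intro l l' h
    have h1 := ωuniq (ν l) l (νmemO l)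
    have h2 := ωuniq (ν l') l' (νmemO l')
    rw [h] at h1
    exact h1.trans h2.symm
  have hkL : k i ≤ (L i).card := hOcard i ▸ Finset.card_le_card (hOleg i)
  obtain ⟨hScard, hSL, hSmin⟩ := inDemand_char hp hkL hd
  have cardOdiff : ∀ l, (O l \ Xr).card = k l - 1 := by
    intro l
    have h1 : O l \ Xr = O l \ (O l ∩ Xr) := by rw [Finset.sdiff_inter_self_left]
    rw [h1, Finset.card_sdiff_of_subset (Finset.inter_subset_left), hXr.1 l, hOcard l]
  have hOXB : ∀ l, O l ∩ (Finset.univ \ Xr) = O l \ Xr := by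
    intro l
    ext v
    simp [Finset.mem_inter, Finset.mem_sdiff]
  by_cases hk1 : k i = 1
  · -- demand one item: use tightness
    obtain ⟨s, rfl⟩ : ∃ s, S = {s} := Finset.card_eq_one.mp (hScard.trans hk1)
    obtain ⟨O'', hO'', hmem⟩ := htight i s (hSL (Finset.mem_singleton_self s))
    refine ⟨O'', hO'', ?_⟩
    have hc : (O'' i).card = 1 := by rw [hO''.1 i, hk1]
    obtain ⟨t, ht⟩ := Finset.card_eq_one.mp hc
    rw [ht, Finset.mem_singleton] at hmem
    rw [ht, hmem]
  have hk2 : 2 ≤ k i := by have := hk i; omega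
  by_cases hSXr : (S ∩ Xr).Nonempty
  · -- Case B : S contains an item of Xr
    obtain ⟨x, hxmem⟩ := hSXr
    have hxS : x ∈ S := Finset.mem_of_mem_inter_left hxmem
    have hxXr : x ∈ Xr := Finset.mem_of_mem_inter_right hxmem
    have hxL : x ∈ L i := hSL hxS
    have hLsub : L i \ Xr ⊆ S := by
      intro y hy
      rw [Finset.mem_sdiff] at hy
      by_contra hyS
      have h1 := hSmin x hxS y hy.1 hyS
      have h2 := hord x hxXr y hy.2
      linarith
    have hA1 : S \ Xr ⊆ L i \ Xr := fun v hv => by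
      rw [Finset.mem_sdiff] at hv ⊢
      exact ⟨hSL hv.1, hv.2⟩
    have hA2 : L i \ Xr ⊆ S \ Xr := fun v hv => by
      rw [Finset.mem_sdiff] at hv ⊢
      exact ⟨hLsub (Finset.mem_sdiff.mpr hv), hv.2⟩
    have hAeq : S \ Xr = L i \ Xr := Finset.Subset.antisymm hA1 hA2
    have hOsub : O i \ Xr ⊆ S \ Xr := by
      rw [hAeq]
      intro v hv
      rw [Finset.mem_sdiff] at hv ⊢
      exact ⟨hOleg i hv.1, hv.2⟩
    have hcardA : (S \ Xr).card = k i - (S ∩ Xr).card := by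
      have h1 : S \ Xr = S \ (S ∩ Xr) := by rw [Finset.sdiff_inter_self_left]
      rw [h1, Finset.card_sdiff_of_subset (Finset.inter_subset_left), hScard]
    have hSXr1 : (S ∩ Xr).card = 1 := by
      have h1 : 1 ≤ (S ∩ Xr).card := Finset.card_pos.mpr ⟨x, hxmem⟩
      have h2 : (O i \ Xr).card ≤ (S \ Xr).card := Finset.card_le_card hOsub
      rw [cardOdiff i, hcardA] at h2
      have := hk i
      omega
    have hSXrx : S ∩ Xr = {x} := by
      obtain ⟨t, ht⟩ := Finset.card_eq_one.mp hSXr1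
      rw [ht] at hxmem ⊢
      rw [Finset.mem_singleton] at hxmem
      rw [hxmem]
    have hAO : O i \ Xr = S \ Xr := by
      apply Finset.eq_of_subset_of_card_le hOsub
      rw [cardOdiff i, hcardA, hSXr1]
    have hSdecomp : S = (O i \ Xr) ∪ {x} := by
      ext v
      rw [Finset.mem_union, hAO, Finset.mem_sdiff, Finset.mem_singleton]
      constructor
      · intro hv
        by_cases hvXr : v ∈ Xr
        · right
          have : v ∈ S ∩ Xr := Finset.mem_inter.mpr ⟨hv, hvXr⟩
          rw [hSXrx, Finset.mem_singleton] at this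
          exact this
        · exact Or.inl ⟨hv, hvXr⟩
      · rintro (⟨h1, _⟩ | rfl)
        · exact h1
        · exact hxS
    -- rotation permutation along a path from x to ν i
    obtain ⟨ρ, hρx, hρmoved, hρedge⟩ :=
      perm_of_path hxXr (hXr.2 x hxXr (ν i) (νmemXr i))
    have hmoved' : ∀ v, ρ v ≠ v → ρ v ∈ Xr := by
      intro v h
      apply hρmoved
      intro h2
      exact h (ρ.injective h2)
    have hρXr' : ∀ v ∈ Xr, ρ v ∈ Xr := by
      intro v hv
      by_cases h : ρ v = v
      · rw [h]; exact hv
      · exact hmoved' v h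
    have hρsymmXr : ∀ v ∈ Xr, ρ.symm v ∈ Xr := by
      intro v hv
      by_cases h : ρ (ρ.symm v) = ρ.symm v
      · rw [← h]
        simpa using hv
      · exact hρmoved _ h
    set π : X → I := fun v => if v = x then i else ω (ρ v) with hπ
    have hLege : ∀ v ∈ Xr, v ≠ x → v ∈ L (ω (ρ v)) := by
      intro v hv hvx
      by_cases h : ρ v = v
      · rw [h]
        exact hOleg _ (ωmem v)
      · obtain ⟨i', hi1, hi2, _⟩ := hρedge v hvx h
        rw [← ωuniq _ _ hi1]
        exact hi2
    have hρXrO : ∀ v ∈ Xr, v ≠ x → ρ v ∈ O (ω (ρ v)) := fun v _ _ => ωmem _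
    have hfib_i : Xr.filter (fun v => π v = i) = {x} := by
      ext v
      rw [Finset.mem_filter, Finset.mem_singleton]
      constructor
      · rintro ⟨hvXr, hπv⟩
        by_contra hvx
        rw [hπ] at hπv
        simp only [if_neg hvx] at hπv
        have h1 : ρ v ∈ O i := hπv ▸ ωmem (ρ v)
        have h2 : ρ v = ν i := νuniq i (ρ v) h1 (hρXr' v hvXr)
        rw [← hρx] at h2
        exact hvx (ρ.injective h2)
      · rintro rfl
        exact ⟨hxXr, by rw [hπ]; simp⟩
    have hfib_ne : ∀ l, l ≠ i → Xr.filter (fun v => π v = l) = {ρ.symm (ν l)} := by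
      intro l hl
      ext v
      rw [Finset.mem_filter, Finset.mem_singleton]
      constructor
      · rintro ⟨hvXr, hπv⟩
        have hvx : v ≠ x := by
          rintro rfl
          rw [hπ] at hπv
          simp at hπv
          exact hl hπv.symm
        rw [hπ] at hπv
        simp only [if_neg hvx] at hπv
        have h1 : ρ v ∈ O l := hπv ▸ ωmem (ρ v)
        have h2 : ρ v = ν l := νuniq l (ρ v) h1 (hρXr' v hvXr)
        rw [← h2]
        simp
      · rintro rfl
        have hval : ρ (ρ.symm (ν l)) = ν l := by simp
        have hvx : ρ.symm (ν l) ≠ x := by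
          rintro h
          rw [h, hρx] at hval
          exact hl (νinj l i hval.symm)
        refine ⟨hρsymmXr _ (νmemXr l), ?_⟩
        rw [hπ]
        simp only [if_neg hvx, hval]
        exact (ωuniq (ν l) l (νmemO l)).symm
    refine ⟨fun l => (O l \ Xr) ∪ Xr.filter (fun v => π v = l), ⟨?_, ?_, ?_⟩, ?_⟩
    · -- cards
      intro l
      have hdisj : Disjoint (O l \ Xr) (Xr.filter (fun v => π v = l)) := by
        rw [Finset.disjoint_left]
        intro a ha hafil
        exact (Finset.mem_sdiff.mp ha).2 (Finset.mem_of_mem_filter a hafil)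
      rw [Finset.card_union_of_disjoint hdisj, cardOdiff l]
      have hfib1 : (Xr.filter (fun v => π v = l)).card = 1 := by
        by_cases hl : l = i
        · rw [hl, hfib_i]; simp
        · rw [hfib_ne l hl]; simp
      rw [hfib1]
      have := hk l
      omega
    · -- partition
      intro v
      by_cases hv : v ∈ Xr
      · refine ⟨π v, ?_, ?_⟩
        · exact Finset.mem_union_right _ (Finset.mem_filter.mpr ⟨hv, rfl⟩)
        · intro l hl
          rcases Finset.mem_union.mp hl with h | h
          · exact absurd hv (Finset.mem_sdiff.mp h).2
          · exact ((Finset.mem_filter.mp h).2).symm ▸ rfl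
      · refine ⟨ω v, ?_, ?_⟩
        · exact Finset.mem_union_left _ (Finset.mem_sdiff.mpr ⟨ωmem v, hv⟩)
        · intro l hl
          rcases Finset.mem_union.mp hl with h | h
          · exact ωuniq v l (Finset.mem_sdiff.mp h).1
          · exact absurd (Finset.mem_filter.mp h).1 hv
    · -- legality
      intro l
      apply Finset.union_subset
      · exact (Finset.sdiff_subset).trans (hOleg l)
      · intro v hvfil
        obtain ⟨hvXr, hπv⟩ := Finset.mem_filter.mp hvfil
        by_cases hvx : v = x
        · subst hvx
          rw [hπ] at hπv
          simp at hπv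
          rw [← hπv]
          exact hxL
        · rw [hπ] at hπv
          simp only [if_neg hvx] at hπv
          rw [← hπv]
          exact hLege v hvXr hvx
    · -- O'' i = S
      show (O i \ Xr) ∪ Xr.filter (fun v => π v = i) = S
      rw [hfib_i, hSdecomp]
  · -- Case A : S avoids Xr
    have hSXr0 : S ∩ Xr = ∅ := Finset.not_nonempty_iff_eq_empty.mp hSXr
    have hSXB : S ⊆ Finset.univ \ Xr := by
      intro v hv
      rw [Finset.mem_sdiff]
      refine ⟨Finset.mem_univ v, fun hvXr => ?_⟩
      have : v ∈ S ∩ Xr := Finset.mem_inter.mpr ⟨hv, hvXr⟩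
      rw [hSXr0] at this
      exact absurd this (Finset.notMem_empty v)
    have hSne : S.Nonempty := Finset.card_pos.mp (by omega)
    obtain ⟨m, hmS, hmmax⟩ := Finset.exists_max_image S p hSne
    set C := S.erase m with hC
    have hCcard : C.card = k i - 1 := by
      rw [hC, Finset.card_erase_of_mem hmS, hScard]
    have hSC : S = insert m C := (Finset.insert_erase hmS).symm
    have hOiXBcard : (O i ∩ (Finset.univ \ Xr)).card = k i - 1 := by
      rw [hOXB i, cardOdiff i]
    have hnon : (O i ∩ (Finset.univ \ Xr)).Nonempty := by
      apply Finset.card_pos.mp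
      rw [hOiXBcard]
      omega
    have hCsub : C ⊆ S := Finset.erase_subset m S
    have hsubdem : SubInDemand (Finset.univ \ Xr) ((O i ∩ (Finset.univ \ Xr)).card)
        (simpVal L i) p C := by
      apply subInDemand_of_cheapest hp (hCsub.trans hSXB) (hCsub.trans hSL)
        (by rw [hCcard, hOiXBcard])
      intro c hc y hyL _ hyC
      by_cases hym : y = m
      · rw [hym]
        exact hmmax c (hCsub hc)
      · have hyS : y ∉ S := by
          intro hyS
          exact hyC (Finset.mem_erase.mpr ⟨hym, hyS⟩)
        exact hSmin c (hCsub hc) y hyL hyS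
    obtain ⟨O', hO', hO'i⟩ := hsub i hnon C hsubdem
    obtain ⟨hO'card, hO'part, hO'XB, hO'L⟩ := hO'
    have hmXB : m ∈ Finset.univ \ Xr := hSXB hmS
    obtain ⟨j, hmj, hjuniq⟩ := hO'part m hmXB
    have hji : j ≠ i := by
      rintro rfl
      rw [hO'i, hC] at hmj
      exact absurd hmj (Finset.notMem_erase m S)
    -- rotation permutation along a path from ν j to ν i
    obtain ⟨ρ, hρx, hρmoved, hρedge⟩ :=
      perm_of_path (νmemXr j) (hXr.2 (ν j) (νmemXr j) (ν i) (νmemXr i))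
    have hmoved' : ∀ v, ρ v ≠ v → ρ v ∈ Xr := by
      intro v h
      apply hρmoved
      intro h2
      exact h (ρ.injective h2)
    have hρXr' : ∀ v ∈ Xr, ρ v ∈ Xr := by
      intro v hv
      by_cases h : ρ v = v
      · rw [h]; exact hv
      · exact hmoved' v h
    have hρsymmXr : ∀ v ∈ Xr, ρ.symm v ∈ Xr := by
      intro v hv
      by_cases h : ρ (ρ.symm v) = ρ.symm v
      · rw [← h]
        simpa using hv
      · exact hρmoved _ h
    set π : X → I := fun v => if v = ν j then j else ω (ρ v) with hπ
    have hLege : ∀ v ∈ Xr, v ≠ ν j → v ∈ L (ω (ρ v)) := by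
      intro v hv hvx
      by_cases h : ρ v = v
      · rw [h]
        exact hOleg _ (ωmem v)
      · obtain ⟨i', hi1, hi2, _⟩ := hρedge v hvx h
        rw [← ωuniq _ _ hi1]
        exact hi2
    have hνji : ν j ≠ ν i := fun h => hji (νinj j i h)
    set w := ρ.symm (ν j) with hw
    have hwval : ρ w = ν j := by rw [hw]; simp
    have hwne : w ≠ ν j := by
      rintro h
      rw [h] at hwval
      rw [hwval] at hρx
      exact hνji hρx
    have hwXr : w ∈ Xr := hρsymmXr _ (νmemXr j)
    have hπw : π w = j := by
      rw [hπ]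
      simp only [if_neg hwne, hwval]
      exact (ωuniq (ν j) j (νmemO j)).symm
    have hfib_i : Xr.filter (fun v => π v = i) = ∅ := by
      rw [Finset.eq_empty_iff_forall_notMem]
      intro v hv
      obtain ⟨hvXr, hπv⟩ := Finset.mem_filter.mp hv
      have hvx : v ≠ ν j := by
        rintro rfl
        rw [hπ] at hπv
        simp at hπv
        exact hji hπv
      rw [hπ] at hπv
      simp only [if_neg hvx] at hπv
      have h1 : ρ v ∈ O i := hπv ▸ ωmem (ρ v)
      have h2 : ρ v = ν i := νuniq i (ρ v) h1 (hρXr' v hvXr)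
      rw [← hρx] at h2
      exact hvx (ρ.injective h2)
    have hfib_j : Xr.filter (fun v => π v = j) = {ν j, w} := by
      ext v
      rw [Finset.mem_filter, Finset.mem_insert, Finset.mem_singleton]
      constructor
      · rintro ⟨hvXr, hπv⟩
        by_cases hvx : v = ν j
        · exact Or.inl hvx
        · right
          rw [hπ] at hπv
          simp only [if_neg hvx] at hπv
          have h1 : ρ v ∈ O j := hπv ▸ ωmem (ρ v)
          have h2 : ρ v = ν j := νuniq j (ρ v) h1 (hρXr' v hvXr)
          exact ρ.injective (h2.trans hwval.symm)
      · rintro (rfl | rfl)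
        · exact ⟨νmemXr j, by rw [hπ]; simp⟩
        · exact ⟨hwXr, hπw⟩
    have hfib_other : ∀ l, l ≠ i → l ≠ j →
        Xr.filter (fun v => π v = l) = {ρ.symm (ν l)} := by
      intro l hli hlj
      ext v
      rw [Finset.mem_filter, Finset.mem_singleton]
      constructor
      · rintro ⟨hvXr, hπv⟩
        have hvx : v ≠ ν j := by
          rintro rfl
          rw [hπ] at hπv
          simp at hπv
          exact hlj hπv.symm
        rw [hπ] at hπv
        simp only [if_neg hvx] at hπv
        have h1 : ρ v ∈ O l := hπv ▸ ωmem (ρ v)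
        have h2 : ρ v = ν l := νuniq l (ρ v) h1 (hρXr' v hvXr)
        rw [← h2]
        simp
      · rintro rfl
        have hval : ρ (ρ.symm (ν l)) = ν l := by simp
        have hvx : ρ.symm (ν l) ≠ ν j := by
          rintro h
          have h2 : ν l = ν i := by
            rw [← hρx, ← h]
            simp
          exact hli (νinj l i h2)
        refine ⟨hρsymmXr _ (νmemXr l), ?_⟩
        rw [hπ]
        simp only [if_neg hvx, hval]
        exact (ωuniq (ν l) l (νmemO l)).symm
    have hO'cardXB : ∀ l, (O' l).card = k l - 1 := by
      intro l
      rw [hO'card l, hOXB l, cardOdiff l]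
    have hkj2 : 2 ≤ k j := by
      have h1 : 1 ≤ (O' j).card := Finset.card_pos.mpr ⟨m, hmj⟩
      rw [hO'cardXB j] at h1
      omega
    have hmnotin : ∀ l, l ≠ j → m ∉ O' l := by
      intro l hl hmem
      exact hl (hjuniq l hmem)
    have hdisj : ∀ l, Disjoint ((O' l).erase m) (Xr.filter (fun v => π v = l)) := by
      intro l
      rw [Finset.disjoint_left]
      intro a ha hafil
      have h1 : a ∈ Finset.univ \ Xr := hO'XB l (Finset.mem_of_mem_erase ha)
      exact (Finset.mem_sdiff.mp h1).2 (Finset.mem_of_mem_filter a hafil)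
    refine ⟨fun l => if l = i then S
      else ((O' l).erase m ∪ Xr.filter (fun v => π v = l)), ⟨?_, ?_, ?_⟩, by simp⟩
    · -- cards
      intro l
      by_cases hli : l = i
      · subst hli
        simp [hScard]
      · simp only [if_neg hli]
        rw [Finset.card_union_of_disjoint (hdisj l)]
        by_cases hlj : l = j
        · subst hlj
          rw [Finset.card_erase_of_mem hmj, hO'cardXB l, hfib_j]
          have hne : ν l ≠ w := fun h => hwne h.symm
          rw [Finset.card_insert_of_notMem (by simpa using hne), Finset.card_singleton]
          omega
        · rw [Finset.erase_eq_of_notMem (hmnotin l hlj), hO'cardXB l,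
            hfib_other l hli hlj, Finset.card_singleton]
          have := hk l
          omega
    · -- partition
      intro v
      by_cases hvXr : v ∈ Xr
      · have hπvi : π v ≠ i := by
          intro h
          have : v ∈ Xr.filter (fun v => π v = i) := Finset.mem_filter.mpr ⟨hvXr, h⟩
          rw [hfib_i] at this
          exact absurd this (Finset.notMem_empty v)
        refine ⟨π v, ?_, ?_⟩
        · simp only [if_neg hπvi]
          exact Finset.mem_union_right _ (Finset.mem_filter.mpr ⟨hvXr, rfl⟩)
        · intro l' hl'
          by_cases hl'i : l' = i
          · rw [hl'i] at hl'
            simp only [if_pos rfl] at hl'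
            exact absurd (Finset.mem_sdiff.mp (hSXB hl')).2 (fun h => h hvXr)
          · simp only [if_neg hl'i] at hl'
            rcases Finset.mem_union.mp hl' with h | h
            · have h1 := hO'XB l' (Finset.mem_of_mem_erase h)
              exact absurd hvXr (Finset.mem_sdiff.mp h1).2
            · exact ((Finset.mem_filter.mp h).2).symm ▸ rfl
      · have hvXB : v ∈ Finset.univ \ Xr := Finset.mem_sdiff.mpr ⟨Finset.mem_univ v, hvXr⟩
        by_cases hvm : v = m
        · subst hvm
          refine ⟨i, by simp only [if_pos rfl]; exact hmS, ?_⟩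
          intro l' hl'
          by_contra hl'i
          simp only [if_neg hl'i] at hl'
          rcases Finset.mem_union.mp hl' with h | h
          · exact absurd h (Finset.notMem_erase v _)
          · exact hvXr (Finset.mem_of_mem_filter v h)
        · obtain ⟨lv, hlv, hlvu⟩ := hO'part v hvXB
          by_cases hlvi : lv = i
          · have hlvC : v ∈ C := by
              rw [← hO'i, ← hlvi]
              exact hlv
            refine ⟨i, by simp only [if_pos rfl]; exact hSC ▸ Finset.mem_insert_of_mem hlvC, ?_⟩
            intro l' hl'
            by_contra hl'i
            simp only [if_neg hl'i] at hl'
            rcases Finset.mem_union.mp hl' with h | h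
            · exact hl'i ((hlvu l' (Finset.mem_of_mem_erase h)).trans hlvi)
            · exact hvXr (Finset.mem_of_mem_filter v h)
          · refine ⟨lv, ?_, ?_⟩
            · simp only [if_neg hlvi]
              exact Finset.mem_union_left _ (Finset.mem_erase.mpr ⟨hvm, hlv⟩)
            · intro l' hl'
              by_cases hl'i : l' = i
              · rw [hl'i] at hl'
                simp only [if_pos rfl] at hl'
                rw [hSC] at hl'
                rcases Finset.mem_insert.mp hl' with h | h
                · exact absurd h hvm
                · rw [← hO'i] at h
                  exact absurd (hlvu i h) (fun hh => hlvi hh.symm)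
              · simp only [if_neg hl'i] at hl'
                rcases Finset.mem_union.mp hl' with h | h
                · exact hlvu l' (Finset.mem_of_mem_erase h)
                · exact absurd (Finset.mem_of_mem_filter v h) hvXr
    · -- legality
      intro l
      by_cases hli : l = i
      · subst hli
        simp only [if_pos rfl]
        exact hSL
      · simp only [if_neg hli]
        apply Finset.union_subset
        · exact (Finset.erase_subset m (O' l)).trans (hO'L l)
        · intro v hvfil
          obtain ⟨hvXr, hπv⟩ := Finset.mem_filter.mp hvfil
          by_cases hvx : v = ν j
          · have hπvj : π v = j := by
              rw [hvx, hπ]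
              simp
            rw [hπvj] at hπv
            rw [← hπv, hvx]
            exact hOleg j (νmemO j)
          · rw [hπ] at hπv
            simp only [if_neg hvx] at hπv
            rw [← hπv]
            exact hLege v hvXr hvx
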